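/- arXiv:1905.08862 — 2 statements merged into one kernel-verified Lean document; each statement's English description precedes it below -/
import Mathlib

section
/- For every integer n ≥ 2, √(2πn) · (1 − 1/n) ≤ n·|Dₙ|/|D_{n−1}| ≤ √(2πn). (The middle quantity is the first intrinsic volume V₁(Dₙ) of the unit ball.) -/
open MeasureTheory

lemma gamma_half_le' (x : ℝ) (hx : 0 < x) :
    Real.Gamma (x + 1/2) ≤ Real.Gamma x * Real.sqrt x := by
  have h01 : (0:ℝ) < x + 1 := by linarith
  have key := Real.convexOn_log_Gamma.2 (Set.mem_Ioi.2 hx) (Set.mem_Ioi.2 h01)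
    (by norm_num : (0:ℝ) ≤ 1/2) (by norm_num : (0:ℝ) ≤ 1/2) (by norm_num)
  simp only [smul_eq_mul, Function.comp_apply] at key
  rw [show (1/2 : ℝ) * x + 1/2 * (x+1) = x + 1/2 by ring] at key
  have hpos : 0 < Real.Gamma (x + 1/2) := Real.Gamma_pos_of_pos (by linarith)
  have hpx : 0 < Real.Gamma x := Real.Gamma_pos_of_pos hx
  have hpx1 : Real.Gamma (x+1) = x * Real.Gamma x := Real.Gamma_add_one hx.ne'
  have h := Real.exp_le_exp.2 key
  rw [Real.exp_log hpos] at h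
  calc Real.Gamma (x + 1/2)
      ≤ Real.exp (1/2 * Real.log (Real.Gamma x) + 1/2 * Real.log (Real.Gamma (x+1))) := h
    _ = Real.sqrt (Real.Gamma x * Real.Gamma (x+1)) := by
        rw [Real.exp_add,
          show (1/2:ℝ) * Real.log (Real.Gamma x) = Real.log (Real.Gamma x) / 2 by ring,
          show (1/2:ℝ) * Real.log (Real.Gamma (x+1)) = Real.log (Real.Gamma (x+1)) / 2 by ring,
          ← Real.log_sqrt hpx.le, ← Real.log_sqrt (Real.Gamma_pos_of_pos h01).le,
          Real.exp_log (Real.sqrt_pos.2 hpx),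
          Real.exp_log (Real.sqrt_pos.2 (Real.Gamma_pos_of_pos h01)),
          ← Real.sqrt_mul hpx.le]
    _ = Real.Gamma x * Real.sqrt x := by
        rw [hpx1, show Real.Gamma x * (x * Real.Gamma x) = x * Real.Gamma x ^ 2 by ring,
          Real.sqrt_mul hx.le, Real.sqrt_sq hpx.le]; ring

/-- The Lebesgue volume `|Dₖ| = π^{k/2}/Γ(k/2+1)` of the closed Euclidean unit ball
in `ℝᵏ`. -/
noncomputable def unitBallVolume (k : ℕ) : ℝ :=
  (volume (Metric.closedBall (0 : EuclideanSpace ℝ (Fin k)) 1)).toReal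

lemma ubv (k : ℕ) (hk : 0 < k) :
    unitBallVolume k = Real.sqrt Real.pi ^ k / Real.Gamma (k / 2 + 1) := by
  haveI : Nonempty (Fin k) := ⟨⟨0, hk⟩⟩
  have h : (0:ℝ) < Real.Gamma (k / 2 + 1) := Real.Gamma_pos_of_pos (by positivity)
  rw [unitBallVolume, EuclideanSpace.volume_closedBall]
  simp only [Fintype.card_fin, ENNReal.ofReal_one, one_pow, one_mul]
  rw [ENNReal.toReal_ofReal (by positivity)]

/-- For every `n ≥ 2`,
`√(2πn) (1 - 1/n) ≤ n·|Dₙ|/|D_{n-1}| ≤ √(2πn)`; the middle quantity is the first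
intrinsic volume `V₁(Dₙ)` of the unit ball. -/
theorem stmt13 (n : ℕ) (hn : 2 ≤ n) :
    Real.sqrt (2 * Real.pi * n) * (1 - 1 / (n : ℝ))
      ≤ (n : ℝ) * unitBallVolume n / unitBallVolume (n - 1)
    ∧ (n : ℝ) * unitBallVolume n / unitBallVolume (n - 1)
      ≤ Real.sqrt (2 * Real.pi * n) := by
  have hn1 : 1 ≤ n := le_trans one_le_two hn
  have hnR : (2:ℝ) ≤ (n:ℝ) := by exact_mod_cast hn
  have hnpos : (0:ℝ) < n := by linarith
  have hcast : ((n-1 : ℕ) : ℝ) = (n:ℝ) - 1 := by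
    push_cast [Nat.cast_sub hn1]; ring
  rw [ubv n (by omega), ubv (n-1) (by omega), hcast]
  set c := Real.sqrt Real.pi with hc_def
  set x := (n:ℝ)/2 with hx_def
  have hx : 0 < x := by positivity
  have h2x : (n:ℝ) = 2*x := by rw [hx_def]; ring
  have harg : ((n:ℝ)-1)/2 + 1 = x + 1/2 := by rw [hx_def]; ring
  rw [harg]
  have hGh : 0 < Real.Gamma (x + 1/2) := Real.Gamma_pos_of_pos (by linarith)
  have hG1 : 0 < Real.Gamma (x + 1) := Real.Gamma_pos_of_pos (by linarith)
  have hGx : 0 < Real.Gamma x := Real.Gamma_pos_of_pos hx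
  have hc : 0 < c := Real.sqrt_pos.2 Real.pi_pos
  have hcpow : c ^ n = c ^ (n-1) * c := by
    rw [← pow_succ]; congr 1; omega
  have hR : (n:ℝ) * (c ^ n / Real.Gamma (x+1)) / (c ^ (n-1) / Real.Gamma (x+1/2))
      = (n:ℝ) * c * Real.Gamma (x+1/2) / Real.Gamma (x+1) := by
    rw [hcpow]; field_simp
  rw [hR]
  have hG1eq : Real.Gamma (x+1) = x * Real.Gamma x := Real.Gamma_add_one hx.ne'
  constructor
  · -- lower bound
    have hL1 : Real.Gamma (x+1) ≤ Real.Gamma (x+1/2) * Real.sqrt (x+1/2) := by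
      have h := gamma_half_le' (x+1/2) (by linarith)
      rw [show x+1/2+1/2 = x+1 by ring] at h; exact h
    have hs : 0 < Real.sqrt (x+1/2) := Real.sqrt_pos.2 (by linarith)
    have step1 : (n:ℝ) * c * Real.Gamma (x+1/2) / (Real.Gamma (x+1/2) * Real.sqrt (x+1/2))
        ≤ (n:ℝ) * c * Real.Gamma (x+1/2) / Real.Gamma (x+1) := by
      gcongr
    have e2 : (n:ℝ) * c * Real.Gamma (x+1/2) / (Real.Gamma (x+1/2) * Real.sqrt (x+1/2))
        = (n:ℝ) * c / Real.sqrt (x+1/2) := by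
      field_simp
    rw [e2] at step1
    refine le_trans ?_ step1
    -- √(2πn)(1-1/n) ≤ n c / √(x+1/2)
    have hA : 0 ≤ Real.sqrt (2*Real.pi*(n:ℝ)) * (1 - 1/(n:ℝ)) := by
      apply mul_nonneg (Real.sqrt_nonneg _)
      have : 1/(n:ℝ) ≤ 1 := by rw [div_le_one hnpos]; linarith
      linarith
    have hB : 0 ≤ (n:ℝ) * c / Real.sqrt (x+1/2) := by positivity
    have hsq : (Real.sqrt (2*Real.pi*(n:ℝ)) * (1 - 1/(n:ℝ)))^2
        ≤ ((n:ℝ) * c / Real.sqrt (x+1/2))^2 := by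
      rw [mul_pow, Real.sq_sqrt (by positivity), div_pow, mul_pow,
        Real.sq_sqrt (by linarith : (0:ℝ) ≤ x + 1/2), hc_def,
        Real.sq_sqrt Real.pi_pos.le]
      rw [le_div_iff₀ (by linarith)]
      have h1n : (1:ℝ) - 1/n = ((n:ℝ)-1)/n := by field_simp
      rw [h1n, div_pow, hx_def]
      have hp := Real.pi_pos
      have hne : (n:ℝ) ≠ 0 := by positivity
      field_simp
      have key : (n:ℝ) * ((n:ℝ)-1)^2 * ((n:ℝ)+1) ≤ (n:ℝ)^4 := by nlinarith [hnR, sq_nonneg ((n:ℝ)-1)]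
      nlinarith [mul_le_mul_of_nonneg_left key (le_of_lt (by linarith : (0:ℝ) < 2*Real.pi))]
    calc Real.sqrt (2*Real.pi*(n:ℝ)) * (1 - 1/(n:ℝ))
        = Real.sqrt ((Real.sqrt (2*Real.pi*(n:ℝ)) * (1 - 1/(n:ℝ)))^2) := (Real.sqrt_sq hA).symm
      _ ≤ Real.sqrt (((n:ℝ) * c / Real.sqrt (x+1/2))^2) := Real.sqrt_le_sqrt hsq
      _ = (n:ℝ) * c / Real.sqrt (x+1/2) := Real.sqrt_sq hB
  · -- upper bound
    have h1 : Real.Gamma (x+1/2) ≤ Real.Gamma x * Real.sqrt x := gamma_half_le' x hx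
    have step1 : (n:ℝ) * c * Real.Gamma (x+1/2) / Real.Gamma (x+1)
        ≤ (n:ℝ) * c * (Real.Gamma x * Real.sqrt x) / Real.Gamma (x+1) := by
      gcongr
    refine le_trans step1 (le_of_eq ?_)
    rw [hG1eq]
    have e1 : (n:ℝ) * c * (Real.Gamma x * Real.sqrt x) / (x * Real.Gamma x)
        = 2 * (c * Real.sqrt x) := by
      rw [h2x]; field_simp
    rw [e1]
    rw [show 2*Real.pi*(n:ℝ) = (2:ℝ)^2 * (Real.pi * x) by rw [h2x]; ring,
      Real.sqrt_mul (by positivity), Real.sqrt_sq (by norm_num),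
      Real.sqrt_mul Real.pi_pos.le]
end

section
/- For all integers n ≥ 2 and 1 ≤ j ≤ n, the constant α(n,j) := (1 − 2/(n+1)) · (n·|Dₙ|/|D_{n−1}|)^{2/(n−1)} · Γ(j+1+2/(n−1))/Γ(j+1) satisfies 1 + ln(n)/n − 2/n ≤ α(n,j) ≤ 1 + 120·ln(n)/n. Moreover, α(n,j) ≥ 1 for all n ≥ 4 and 1 ≤ j ≤ n. -/
open MeasureTheory

/-- Affentranger's constant
`α(n,j) = (1 - 2/(n+1)) · (n·|Dₙ|/|D_{n-1}|)^{2/(n-1)} · Γ(j+1+2/(n-1))/Γ(j+1)`. -/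
noncomputable def alphaC (n j : ℕ) : ℝ :=
  (1 - 2 / ((n : ℝ) + 1)) *
    ((n : ℝ) * unitBallVolume n / unitBallVolume (n - 1)) ^ (2 / ((n : ℝ) - 1)) *
    (Real.Gamma ((j : ℝ) + 1 + 2 / ((n : ℝ) - 1)) / Real.Gamma ((j : ℝ) + 1))

section Aux
open Real Set

lemma sq_Gamma_add_half_le {x : ℝ} (hx : 0 < x) :
    Real.Gamma (x + 1 / 2) ^ 2 ≤ Real.Gamma x * Real.Gamma (x + 1) := by
  have h1 : (0:ℝ) < x + 1 := by linarith
  have hc := Real.convexOn_log_Gamma.2 (mem_Ioi.2 hx) (mem_Ioi.2 h1)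
      (by norm_num : (0:ℝ) ≤ 1/2) (by norm_num : (0:ℝ) ≤ 1/2) (by norm_num)
  simp only [smul_eq_mul, Function.comp_apply] at hc
  have hmid : (1/2 : ℝ) * x + 1/2 * (x + 1) = x + 1/2 := by ring
  rw [hmid] at hc
  have hA : 0 < Real.Gamma (x + 1/2) := Real.Gamma_pos_of_pos (by linarith)
  have hB : 0 < Real.Gamma x := Real.Gamma_pos_of_pos hx
  have hC : 0 < Real.Gamma (x + 1) := Real.Gamma_pos_of_pos h1
  have : Real.log (Real.Gamma (x + 1/2) ^ 2) ≤ Real.log (Real.Gamma x * Real.Gamma (x+1)) := by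
    rw [Real.log_pow, Real.log_mul hB.ne' hC.ne']
    push_cast; linarith
  calc Real.Gamma (x + 1/2) ^ 2 = Real.exp (Real.log (Real.Gamma (x+1/2) ^ 2)) := by
        rw [Real.exp_log (by positivity)]
    _ ≤ Real.exp (Real.log (Real.Gamma x * Real.Gamma (x+1))) := Real.exp_le_exp.2 this
    _ = _ := Real.exp_log (by positivity)

lemma Gamma_interp_le {u ε : ℝ} (hu : 1 ≤ u) (h0 : 0 ≤ ε) (h1 : ε ≤ 1) :
    Real.Gamma (u + ε) ≤ Real.Gamma u * Real.exp (ε * Real.log u) := by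
  have hu0 : (0:ℝ) < u := by linarith
  have hc := Real.convexOn_log_Gamma.2 (mem_Ioi.2 hu0) (mem_Ioi.2 (by linarith : (0:ℝ) < u + 1))
      (by linarith : (0:ℝ) ≤ 1 - ε) h0 (by ring)
  simp only [smul_eq_mul, Function.comp_apply] at hc
  have hmid : (1 - ε) * u + ε * (u + 1) = u + ε := by ring
  rw [hmid] at hc
  have hB : 0 < Real.Gamma u := Real.Gamma_pos_of_pos hu0
  have hC : 0 < Real.Gamma (u + 1) := Real.Gamma_pos_of_pos (by linarith)
  have hΓ1 : Real.Gamma (u + 1) = u * Real.Gamma u := Real.Gamma_add_one hu0.ne'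
  have hlog : Real.log (Real.Gamma (u+1)) = Real.log u + Real.log (Real.Gamma u) := by
    rw [hΓ1, Real.log_mul hu0.ne' hB.ne']
  have hle : Real.log (Real.Gamma (u + ε)) ≤ Real.log (Real.Gamma u) + ε * Real.log u := by
    rw [hlog] at hc; nlinarith [hc]
  calc Real.Gamma (u + ε) = Real.exp (Real.log (Real.Gamma (u + ε))) := by
        rw [Real.exp_log (Real.Gamma_pos_of_pos (by linarith))]
    _ ≤ Real.exp (Real.log (Real.Gamma u) + ε * Real.log u) := Real.exp_le_exp.2 hle
    _ = _ := by rw [Real.exp_add, Real.exp_log hB]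

lemma unitBallVolume_eq (k : ℕ) (hk : 1 ≤ k) :
    unitBallVolume k = Real.sqrt π ^ k / Real.Gamma (k / 2 + 1) := by
  have : Nonempty (Fin k) := ⟨⟨0, hk⟩⟩
  rw [unitBallVolume, EuclideanSpace.volume_closedBall, Fintype.card_fin]
  have hΓ : 0 < Real.Gamma ((k : ℝ) / 2 + 1) := Real.Gamma_pos_of_pos (by positivity)
  simp only [ENNReal.ofReal_one, one_pow, one_mul]
  rw [ENNReal.toReal_ofReal (by positivity)]

lemma ratio_eq (n : ℕ) (hn : 2 ≤ n) :
    (n : ℝ) * unitBallVolume n / unitBallVolume (n - 1)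
      = Real.sqrt π * n * Real.Gamma ((n : ℝ)/2 + 1/2) / Real.Gamma ((n : ℝ)/2 + 1) := by
  have h1 : 1 ≤ n := by omega
  rw [unitBallVolume_eq n h1, unitBallVolume_eq (n-1) (by omega)]
  have hcast : ((n - 1 : ℕ) : ℝ) = (n : ℝ) - 1 := by
    push_cast [Nat.cast_sub h1]; ring
  have hpow : Real.sqrt π ^ n = Real.sqrt π ^ (n - 1) * Real.sqrt π := by
    conv_lhs => rw [show n = (n - 1) + 1 by omega]
    rw [pow_succ]
  have harg : ((n - 1 : ℕ) : ℝ) / 2 + 1 = (n : ℝ)/2 + 1/2 := by rw [hcast]; ring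
  rw [harg, hpow]
  have hΓ1 : 0 < Real.Gamma ((n : ℝ)/2 + 1/2) := Real.Gamma_pos_of_pos (by positivity)
  have hΓ2 : 0 < Real.Gamma ((n : ℝ)/2 + 1) := Real.Gamma_pos_of_pos (by positivity)
  have hs : (0:ℝ) < Real.sqrt π ^ (n-1) := by positivity
  field_simp

lemma ratio_sq_bounds (n : ℕ) (hn : 2 ≤ n) :
    0 < (n : ℝ) * unitBallVolume n / unitBallVolume (n - 1)
    ∧ 4 * π / 3 * n ≤ ((n : ℝ) * unitBallVolume n / unitBallVolume (n - 1)) ^ 2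
    ∧ ((n : ℝ) * unitBallVolume n / unitBallVolume (n - 1)) ^ 2 ≤ 2 * π * n := by
  have hN : (2:ℝ) ≤ n := by exact_mod_cast hn
  set x : ℝ := (n : ℝ) / 2 with hxdef
  have hx1 : (1:ℝ) ≤ x := by rw [hxdef]; linarith
  have hx0 : (0:ℝ) < x := by linarith
  have hΓh : 0 < Real.Gamma (x + 1/2) := Real.Gamma_pos_of_pos (by linarith)
  have hΓ1 : 0 < Real.Gamma (x + 1) := Real.Gamma_pos_of_pos (by linarith)
  have hΓx : 0 < Real.Gamma x := Real.Gamma_pos_of_pos hx0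
  rw [ratio_eq n hn]
  have hb : 0 < Real.sqrt π * n * Real.Gamma ((n:ℝ)/2 + 1/2) / Real.Gamma ((n:ℝ)/2 + 1) := by
    have : (0:ℝ) < Real.sqrt π := Real.sqrt_pos.2 Real.pi_pos
    positivity
  refine ⟨hb, ?_, ?_⟩
  · -- lower bound: Γ(x+1)² ≤ Γ(x+1/2)² (x+1/2)
    have key := sq_Gamma_add_half_le (show (0:ℝ) < x + 1/2 by linarith)
    have h32 : x + 1/2 + 1/2 = x + 1 := by ring
    have hadd : Real.Gamma (x + 1/2 + 1) = (x + 1/2) * Real.Gamma (x + 1/2) :=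
      Real.Gamma_add_one (by positivity)
    rw [h32, hadd] at key
    -- key : Γ(x+1)^2 ≤ Γ(x+1/2) * ((x+1/2) * Γ(x+1/2))
    have hsq : (Real.sqrt π * n * Real.Gamma (x + 1/2) / Real.Gamma (x+1)) ^ 2
        = π * n^2 * (Real.Gamma (x+1/2)^2 / Real.Gamma (x+1)^2) := by
      rw [div_pow, mul_pow, mul_pow, Real.sq_sqrt Real.pi_pos.le]
      ring
    have harg1 : (n:ℝ)/2 + 1/2 = x + 1/2 := by rw [hxdef]
    have harg2 : (n:ℝ)/2 + 1 = x + 1 := by rw [hxdef]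
    rw [harg1, harg2, hsq]
    have hfr : 1 / (x + 1/2) ≤ Real.Gamma (x+1/2)^2 / Real.Gamma (x+1)^2 := by
      rw [div_le_div_iff₀ (by linarith) (by positivity)]
      nlinarith [key, sq_nonneg (Real.Gamma (x+1))]
    have hx2 : x + 1/2 = ((n:ℝ) + 1)/2 := by rw [hxdef]; ring
    have h23 : 4 * π / 3 * n ≤ π * n^2 * (1 / (x + 1/2)) := by
      rw [hx2]
      rw [mul_one_div, le_div_iff₀ (by linarith)]
      nlinarith [mul_nonneg (mul_nonneg Real.pi_pos.le (by linarith : (0:ℝ) ≤ (n:ℝ))) (by linarith : (0:ℝ) ≤ (n:ℝ) - 2)]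
    calc 4 * π / 3 * n ≤ π * n^2 * (1 / (x + 1/2)) := h23
      _ ≤ π * n^2 * (Real.Gamma (x+1/2)^2 / Real.Gamma (x+1)^2) := by
          apply mul_le_mul_of_nonneg_left hfr (by positivity)
  · -- upper bound
    have key := sq_Gamma_add_half_le hx0
    have hadd : Real.Gamma (x + 1) = x * Real.Gamma x := Real.Gamma_add_one hx0.ne'
    have hsq : (Real.sqrt π * n * Real.Gamma (x + 1/2) / Real.Gamma (x+1)) ^ 2
        = π * n^2 * (Real.Gamma (x+1/2)^2 / Real.Gamma (x+1)^2) := by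
      rw [div_pow, mul_pow, mul_pow, Real.sq_sqrt Real.pi_pos.le]
      ring
    have harg1 : (n:ℝ)/2 + 1/2 = x + 1/2 := by rw [hxdef]
    have harg2 : (n:ℝ)/2 + 1 = x + 1 := by rw [hxdef]
    rw [harg1, harg2, hsq]
    have hfr : Real.Gamma (x+1/2)^2 / Real.Gamma (x+1)^2 ≤ 1 / x := by
      rw [div_le_div_iff₀ (by positivity) hx0]
      calc Real.Gamma (x+1/2)^2 * x ≤ Real.Gamma x * Real.Gamma (x+1) * x := by
            nlinarith [key]
        _ = 1 * Real.Gamma (x+1)^2 := by rw [hadd]; ring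
    calc π * n^2 * (Real.Gamma (x+1/2)^2 / Real.Gamma (x+1)^2)
        ≤ π * n^2 * (1 / x) := mul_le_mul_of_nonneg_left hfr (by positivity)
      _ = 2 * π * n := by rw [hxdef]; field_simp

-- exp(1.4) ≤ 4π/3
lemma exp_14_le : Real.exp 1.4 ≤ 4 * π / 3 := by
  have h1 : Real.exp 0.1 ≤ 10/9 := by
    have h := Real.add_one_le_exp (-0.1)
    have hp := Real.exp_pos (-0.1)
    rw [show Real.exp 0.1 = (Real.exp (-0.1))⁻¹ by rw [← Real.exp_neg]; norm_num]
    rw [inv_le_comm₀ hp (by norm_num)]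
    linarith
  have h4 : Real.exp 0.4 ≤ (10/9)^4 := by
    have : Real.exp 0.4 = Real.exp 0.1 ^ 4 := by
      rw [← Real.exp_nat_mul]; norm_num
    rw [this]
    exact pow_le_pow_left₀ (Real.exp_pos 0.1).le h1 4
  have he : Real.exp 1 < 2.7182818286 := Real.exp_one_lt_d9
  have h14 : Real.exp 1.4 = Real.exp 1 * Real.exp 0.4 := by
    rw [← Real.exp_add]; norm_num
  have hpi : 3.141592 < π := Real.pi_gt_d6
  rw [h14]
  nlinarith [Real.exp_pos 1, Real.exp_pos 0.4]

lemma lower_main (n j : ℕ) (hn : 2 ≤ n) (hj : 1 ≤ j) :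
    ((n:ℝ) - 1 + Real.log n + 1.4) / ((n:ℝ) + 1) ≤ alphaC n j := by
  have hN : (2:ℝ) ≤ n := by exact_mod_cast hn
  set N : ℝ := (n : ℝ) with hNdef
  obtain ⟨hb, hblow, hbup⟩ := ratio_sq_bounds n hn
  set b : ℝ := (n : ℝ) * unitBallVolume n / unitBallVolume (n - 1) with hbdef
  set ε : ℝ := 2 / (N - 1) with hεdef
  have hε : 0 < ε := div_pos two_pos (by linarith)
  have hu : (2:ℝ) ≤ (j:ℝ) + 1 := by
    have : (1:ℝ) ≤ j := by exact_mod_cast hj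
    linarith
  -- Gamma ratio ≥ 1
  have hΓu : 0 < Real.Gamma ((j:ℝ) + 1) := Real.Gamma_pos_of_pos (by linarith)
  have hR : 1 ≤ Real.Gamma ((j:ℝ) + 1 + ε) / Real.Gamma ((j:ℝ) + 1) := by
    rw [le_div_iff₀ hΓu, one_mul]
    exact Real.Gamma_strictMonoOn_Ici.monotoneOn (mem_Ici.2 hu)
      (mem_Ici.2 (by linarith)) (by linarith)
  -- rpow lower bound
  have hL1 : 1.4 + Real.log N ≤ Real.log (b^2) := by
    have h1 : Real.log (4*π/3*N) ≤ Real.log (b^2) :=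
      Real.log_le_log (by positivity) hblow
    have h2 : Real.log (4*π/3*N) = Real.log (4*π/3) + Real.log N := by
      rw [Real.log_mul (by positivity) (by positivity)]
    have h3 : (1.4:ℝ) ≤ Real.log (4*π/3) := by
      rw [Real.le_log_iff_exp_le (by positivity)]
      exact exp_14_le
    linarith
  have hlogb2 : Real.log (b^2) = 2 * Real.log b := by
    rw [Real.log_pow]; norm_num
  have hQ : 1 + (Real.log N + 1.4)/(N-1) ≤ b ^ ε := by
    rw [Real.rpow_def_of_pos hb]
    refine le_trans ?_ (Real.add_one_le_exp _)
    have : Real.log b * ε = Real.log (b^2) / (N - 1) := by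
      rw [hlogb2, hεdef]; field_simp
    rw [this]
    have : (Real.log N + 1.4)/(N-1) ≤ Real.log (b^2) / (N-1) := by
      apply div_le_div_of_nonneg_right ?_ (by linarith)
      · linarith
    linarith
  -- combine
  have hP : 0 ≤ 1 - 2/(N+1) := by
    rw [sub_nonneg, div_le_one (by linarith)]; linarith
  have hq : 0 ≤ 1 + (Real.log N + 1.4)/(N-1) := by
    have h0 : 0 ≤ Real.log N := Real.log_nonneg (by linarith)
    have : 0 ≤ (Real.log N + 1.4)/(N-1) := div_nonneg (by linarith) (by linarith)
    linarith
  have hbε : (0:ℝ) < b ^ ε := Real.rpow_pos_of_pos hb ε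
  have key : (1 - 2/(N+1)) * (1 + (Real.log N + 1.4)/(N-1)) * 1 ≤ alphaC n j := by
    rw [alphaC]
    apply mul_le_mul
    · exact mul_le_mul_of_nonneg_left hQ hP
    · exact hR
    · norm_num
    · positivity
  refine le_trans (le_of_eq ?_) key
  have h1 : N - 1 ≠ 0 := by linarith
  have h2 : N + 1 ≠ 0 := by linarith
  field_simp
  ring

-- 2π(5/4)² ≤ exp 2.4
lemma const_le_exp24 : 2 * π * (5/4:ℝ)^2 ≤ Real.exp 2.4 := by
  have he : (2.7182818283:ℝ) < Real.exp 1 := Real.exp_one_gt_d9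
  have h04 : (1.4:ℝ) ≤ Real.exp 0.4 := by
    have := Real.add_one_le_exp (0.4:ℝ); linarith
  have h24 : Real.exp 2.4 = Real.exp 1 * Real.exp 1 * Real.exp 0.4 := by
    rw [← Real.exp_add, ← Real.exp_add]; norm_num
  have hpi : π < 3.15 := by
    have := Real.pi_lt_d6; linarith
  rw [h24]
  nlinarith [Real.exp_pos (0.4:ℝ)]



lemma exp25_le : Real.exp 2.5 ≤ (8/7:ℝ)^20 := by
  have h1 : Real.exp (1/8 : ℝ) ≤ 8/7 := by
    have h := Real.add_one_le_exp (-(1/8):ℝ)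
    have hp := Real.exp_pos (-(1/8):ℝ)
    rw [show Real.exp (1/8:ℝ) = (Real.exp (-(1/8):ℝ))⁻¹ by rw [← Real.exp_neg]; norm_num]
    rw [inv_le_comm₀ hp (by norm_num)]
    linarith
  have : Real.exp 2.5 = Real.exp (1/8 : ℝ) ^ 20 := by
    rw [← Real.exp_nat_mul]; norm_num
  rw [this]
  exact pow_le_pow_left₀ (Real.exp_pos _).le h1 20

lemma endgame (N L T : ℝ) (hN : 4 ≤ N) (hL1 : 1 ≤ L)
    (hLe : L ≤ N / 2.7182818283) (hT0 : 0 ≤ T)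
    (hTle : T ≤ (3*L + 2.4)/(N-1)) : Real.exp T ≤ 1 + 120 * L / N := by
  have hN1 : (0:ℝ) < N - 1 := by linarith
  have hT25 : T ≤ 2.5 := by
    refine hTle.trans ?_
    rw [div_le_iff₀ hN1]
    have hLe' : L * 2.7182818283 ≤ N := (le_div_iff₀ (by norm_num)).1 hLe
    linarith
  have hexpT : Real.exp T ≤ (8/7:ℝ)^20 :=
    (Real.exp_le_exp.2 hT25).trans exp25_le
  have hET : Real.exp T - 1 ≤ T * Real.exp T := by
    have h := mul_le_mul_of_nonneg_right (Real.add_one_le_exp (-T)) (Real.exp_pos T).le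
    rw [← Real.exp_add] at h
    simp only [neg_add_cancel, Real.exp_zero] at h
    nlinarith [h]
  have hfin : T * Real.exp T ≤ 120 * L / N := by
    have hc : ((8/7:ℝ)^20) ≤ 50/3 := by norm_num
    have hA0 : 0 ≤ (3*L+2.4)/(N-1) := div_nonneg (by linarith) hN1.le
    have step : T * Real.exp T ≤ ((3*L+2.4)/(N-1)) * (50/3) :=
      mul_le_mul hTle (hexpT.trans hc) (Real.exp_pos T).le hA0
    refine step.trans ?_
    rw [div_mul_eq_mul_div, div_le_div_iff₀ hN1 (by linarith : (0:ℝ) < N)]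
    nlinarith [hL1, hN]
  linarith

lemma upper_main (n j : ℕ) (hn : 4 ≤ n) (hj : 1 ≤ j) (hjn : j ≤ n) :
    alphaC n j ≤ 1 + 120 * Real.log n / n := by
  have hN : (4:ℝ) ≤ n := by exact_mod_cast hn
  set N : ℝ := (n : ℝ) with hNdef
  obtain ⟨hb, hblow, hbup⟩ := ratio_sq_bounds n (by omega)
  set b : ℝ := (n : ℝ) * unitBallVolume n / unitBallVolume (n - 1) with hbdef
  set ε : ℝ := 2 / (N - 1) with hεdef
  have hN1 : (0:ℝ) < N - 1 := by linarith
  have hε : 0 < ε := div_pos two_pos hN1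
  have hε1 : ε ≤ 1 := by
    rw [hεdef, div_le_one hN1]; linarith
  set u : ℝ := (j:ℝ) + 1 with hudef
  have hu2 : (2:ℝ) ≤ u := by
    have : (1:ℝ) ≤ j := by exact_mod_cast hj
    rw [hudef]; linarith
  have huN : u ≤ N + 1 := by
    have : (j:ℝ) ≤ (n:ℝ) := Nat.cast_le.2 hjn
    rw [hudef, hNdef]; linarith
  have hΓu : 0 < Real.Gamma u := Real.Gamma_pos_of_pos (by linarith)
  set L : ℝ := Real.log N with hLdef
  have hL1 : 1 ≤ L := by
    rw [hLdef, Real.le_log_iff_exp_le (by linarith)]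
    have := Real.exp_one_lt_d9; linarith
  -- b ≥ 1 hence log b ≥ 0
  have hb1 : 1 ≤ b := by
    nlinarith [Real.pi_gt_d6]
  have hlogb : 0 ≤ Real.log b := Real.log_nonneg hb1
  have hlogu : 0 ≤ Real.log u := Real.log_nonneg (by linarith)
  set T : ℝ := ε * (Real.log b + Real.log u) with hTdef
  have hT0 : 0 ≤ T := by positivity
  -- alphaC ≤ exp T
  have hαT : alphaC n j ≤ Real.exp T := by
    rw [alphaC]
    have hP : 1 - 2/(N+1) ≤ 1 := by
      have : 0 ≤ 2/(N+1) := by positivity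
      linarith
    have hP0 : 0 ≤ 1 - 2/(N+1) := by
      rw [sub_nonneg, div_le_one (by linarith)]; linarith
    have hQ : b ^ ε = Real.exp (ε * Real.log b) := by
      rw [Real.rpow_def_of_pos hb, mul_comm]
    have hR : Real.Gamma (u + ε) / Real.Gamma u ≤ Real.exp (ε * Real.log u) := by
      rw [div_le_iff₀ hΓu]
      have := Gamma_interp_le (by linarith : 1 ≤ u) hε.le hε1
      linarith [this]
    have hRnn : 0 ≤ Real.Gamma ((j:ℝ) + 1 + ε) / Real.Gamma ((j:ℝ)+1) := by
      have := Real.Gamma_pos_of_pos (show (0:ℝ) < (j:ℝ)+1+ε by push_cast; positivity)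
      positivity
    have harg : (j:ℝ) + 1 + ε = u + ε := by rw [hudef]
    calc (1 - 2/(N+1)) * b ^ ε * (Real.Gamma ((j:ℝ)+1+ε) / Real.Gamma ((j:ℝ)+1))
        ≤ 1 * b ^ ε * (Real.Gamma ((j:ℝ)+1+ε) / Real.Gamma ((j:ℝ)+1)) := by
          apply mul_le_mul_of_nonneg_right (mul_le_mul_of_nonneg_right hP (Real.rpow_pos_of_pos hb ε).le) hRnn
      _ = Real.exp (ε * Real.log b) * (Real.Gamma (u+ε) / Real.Gamma u) := by
          rw [one_mul, hQ, harg, hudef]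
      _ ≤ Real.exp (ε * Real.log b) * Real.exp (ε * Real.log u) := by
          apply mul_le_mul_of_nonneg_left hR (Real.exp_pos _).le
      _ = Real.exp T := by rw [← Real.exp_add, hTdef]; ring_nf
  -- T ≤ (3L + 2.4)/(N-1)
  have hTle : T ≤ (3*L + 2.4)/(N-1) := by
    have h2b : 2 * Real.log b ≤ Real.log (2*π*N) := by
      have h := Real.log_le_log (by positivity : (0:ℝ) < b^2) hbup
      rwa [Real.log_pow, Nat.cast_ofNat, ] at h
    have hlogu2 : Real.log u ≤ Real.log ((5/4)*N) := by
      apply Real.log_le_log (by linarith)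
      linarith
    have hsum : 2 * Real.log b + 2 * Real.log u ≤ 3*L + 2.4 := by
      have e1 : Real.log (2*π*N) = Real.log (2*π) + L := by
        rw [hLdef, Real.log_mul (by positivity) (by linarith)]
      have e2 : Real.log ((5/4)*N) = Real.log (5/4) + L := by
        rw [hLdef, Real.log_mul (by norm_num) (by linarith)]
      have e3 : Real.log (2*π) + 2 * Real.log (5/4) ≤ 2.4 := by
        have : Real.log (2*π) + 2 * Real.log (5/4) = Real.log (2*π*(5/4)^2) := by
          conv_rhs => rw [Real.log_mul (by positivity) (by positivity), Real.log_pow]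
          push_cast; ring
        rw [this, Real.log_le_iff_le_exp (by positivity)]
        exact const_le_exp24
      linarith
    rw [hTdef, hεdef]
    rw [div_mul_eq_mul_div, div_le_div_iff₀ hN1 hN1]
    nlinarith [hsum]
  have hLe : L ≤ N / 2.7182818283 := by
    have he : (2.7182818283:ℝ) < Real.exp 1 := Real.exp_one_gt_d9
    have h1 : Real.log (N / Real.exp 1) ≤ N / Real.exp 1 - 1 :=
      Real.log_le_sub_one_of_pos (by positivity)
    have h2 : Real.log (N / Real.exp 1) = L - 1 := by
      rw [hLdef, Real.log_div (by linarith) (Real.exp_pos 1).ne', Real.log_exp]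
    have h3 : N / Real.exp 1 ≤ N / 2.7182818283 := by
      apply div_le_div_of_nonneg_left (by linarith) (by norm_num) he.le
    linarith
  exact le_trans hαT (endgame N L T hN hL1 hLe hT0 hTle)

lemma Gamma_three_halves : Real.Gamma (3/2 : ℝ) = Real.sqrt π / 2 := by
  have : (3/2 : ℝ) = 1/2 + 1 := by norm_num
  rw [this, Real.Gamma_add_one (by norm_num), Real.Gamma_one_half_eq]
  ring

lemma uBV1 : unitBallVolume 1 = 2 := by
  rw [unitBallVolume_eq 1 le_rfl]
  have hs : Real.sqrt π ≠ 0 := ne_of_gt (Real.sqrt_pos.2 Real.pi_pos)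
  rw [show ((1:ℕ):ℝ)/2 + 1 = 3/2 by norm_num, Gamma_three_halves]
  field_simp

lemma uBV2 : unitBallVolume 2 = π := by
  rw [unitBallVolume_eq 2 (by norm_num)]
  rw [show ((2:ℕ):ℝ)/2 + 1 = 2 by norm_num, Real.Gamma_two]
  rw [Real.sq_sqrt Real.pi_pos.le]
  norm_num

lemma uBV3 : unitBallVolume 3 = 4 * π / 3 := by
  rw [unitBallVolume_eq 3 (by norm_num)]
  have hs : (0:ℝ) < Real.sqrt π := Real.sqrt_pos.2 Real.pi_pos
  have h52 : ((3:ℕ):ℝ)/2 + 1 = 3/2 + 1 := by norm_num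
  rw [h52, Real.Gamma_add_one (by norm_num), Gamma_three_halves]
  have hcube : Real.sqrt π ^ 3 = π * Real.sqrt π := by
    rw [pow_succ, Real.sq_sqrt Real.pi_pos.le]
  rw [hcube]
  field_simp
  ring

lemma Gamma_ratio_j (j : ℕ) :
    Real.Gamma ((j:ℝ) + 1 + 1) / Real.Gamma ((j:ℝ) + 1) = (j:ℝ) + 1 := by
  have hΓ : 0 < Real.Gamma ((j:ℝ)+1) := Real.Gamma_pos_of_pos (by positivity)
  rw [Real.Gamma_add_one (by positivity : ((j:ℝ)+1) ≠ 0)]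
  field_simp

lemma Gamma_ratio_j2 (j : ℕ) :
    Real.Gamma ((j:ℝ) + 1 + 2) / Real.Gamma ((j:ℝ) + 1) = ((j:ℝ) + 1) * ((j:ℝ) + 2) := by
  have hΓ : 0 < Real.Gamma ((j:ℝ)+1) := Real.Gamma_pos_of_pos (by positivity)
  have h1 : (j:ℝ) + 1 + 2 = ((j:ℝ) + 2) + 1 := by ring
  have h2 : (j:ℝ) + 2 = ((j:ℝ) + 1) + 1 := by ring
  rw [h1, Real.Gamma_add_one (by positivity : ((j:ℝ)+2) ≠ 0), h2,
    Real.Gamma_add_one (by positivity : ((j:ℝ)+1) ≠ 0)]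
  field_simp

lemma alpha2 (j : ℕ) : alphaC 2 j = π^2 / 3 * (((j:ℝ)+1) * ((j:ℝ)+2)) := by
  rw [alphaC]
  norm_num [uBV1, uBV2]
  rw [Gamma_ratio_j2]
  ring

lemma alpha3 (j : ℕ) : alphaC 3 j = 2 * ((j:ℝ)+1) := by
  rw [alphaC]
  norm_num [uBV2, uBV3]
  rw [Gamma_ratio_j]
  have hpi := Real.pi_pos
  field_simp
  ring

lemma lower_glue (n j : ℕ) (hn : 2 ≤ n) (hj : 1 ≤ j) :
    1 + Real.log n / n - 2 / (n : ℝ) ≤ alphaC n j := by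
  have hM := lower_main n j hn hj
  have hN : (2:ℝ) ≤ n := by exact_mod_cast hn
  have hN0 : (0:ℝ) < n := by linarith
  have hlog : Real.log n ≤ (n:ℝ) - 1 := by
    have := Real.log_le_sub_one_of_pos hN0; linarith
  refine le_trans ?_ hM
  have heq : 1 + Real.log n / n - 2 / (n:ℝ) = ((n:ℝ) + Real.log n - 2) / n := by
    field_simp
  rw [heq, div_le_div_iff₀ hN0 (by linarith : (0:ℝ) < (n:ℝ) + 1)]
  nlinarith [hlog, hN]

lemma ge_one_glue (n j : ℕ) (hn : 4 ≤ n) (hj : 1 ≤ j) :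
    1 ≤ alphaC n j := by
  have hM := lower_main n j (by omega) hj
  have hN : (4:ℝ) ≤ n := by exact_mod_cast hn
  have hL : (1:ℝ) ≤ Real.log n := by
    rw [Real.le_log_iff_exp_le (by linarith)]
    have := Real.exp_one_lt_d9; linarith
  refine le_trans ?_ hM
  rw [le_div_iff₀ (by linarith : (0:ℝ) < (n:ℝ) + 1)]
  linarith

lemma upper_glue (n j : ℕ) (hn : 2 ≤ n) (hj : 1 ≤ j) (hjn : j ≤ n) :
    alphaC n j ≤ 1 + 120 * Real.log n / n := by
  rcases eq_or_lt_of_le hn with h2 | h2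
  · -- n = 2
    subst h2
    have hpi : π < 3.141593 := Real.pi_lt_d6
    have hlog : (0.6931471803:ℝ) < Real.log 2 := Real.log_two_gt_d9
    have hc : ((2:ℕ):ℝ) = 2 := by norm_num
    rw [alpha2, hc]
    interval_cases j <;> push_cast <;> nlinarith [Real.pi_pos]
  · rcases eq_or_lt_of_le (Nat.succ_le_of_lt h2) with h3 | h3
    · -- n = 3
      have : n = 3 := by omega
      subst this
      have hlog3 : (1:ℝ) ≤ Real.log 3 := by
        rw [Real.le_log_iff_exp_le (by norm_num)]
        have := Real.exp_one_lt_d9; linarith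
      have hc : ((3:ℕ):ℝ) = 3 := by norm_num
      have hj3 : (j:ℝ) ≤ 3 := by exact_mod_cast hjn
      rw [alpha3, hc]
      linarith
    · exact upper_main n j (by omega) hj hjn

end Aux

/-- For all `n ≥ 2` and `1 ≤ j ≤ n`,
`1 + ln(n)/n - 2/n ≤ α(n,j) ≤ 1 + 120·ln(n)/n`; moreover `α(n,j) ≥ 1` for all `n ≥ 4`
and `1 ≤ j ≤ n`. -/
theorem stmt17 :
    (∀ n j : ℕ, 2 ≤ n → 1 ≤ j → j ≤ n →
      1 + Real.log n / n - 2 / (n : ℝ) ≤ alphaC n j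
      ∧ alphaC n j ≤ 1 + 120 * Real.log n / n)
    ∧ ∀ n j : ℕ, 4 ≤ n → 1 ≤ j → j ≤ n → 1 ≤ alphaC n j := by
  exact ⟨fun n j hn hj hjn => ⟨lower_glue n j hn hj, upper_glue n j hn hj hjn⟩,
    fun n j hn hj _ => ge_one_glue n j hn hj⟩
end
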